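/- arXiv:1406.7868 — 2 statements merged into one kernel-verified Lean document; each statement's English description precedes it below -/
import Mathlib

section
/- Let X be a pointed metric space. The sets of the form U = ⋂_{n≥1} { f ∈ Lip₀(X) : Lip_{F_n}(f) ≤ λ_n }, where (F_n) is a sequence of finite subsets of X and (λ_n) is a sequence of positive real numbers tending to ∞, form a base of neighborhoods of zero in (Lip₀(X), τ_γ). -/
open Filter Topology Set Pointwise

set_option linter.unusedSectionVars false
set_option linter.unusedVariables false

noncomputable section

namespace LipApprox

variable (X : Type*) [MetricSpace X] (x₀ : X)
variable (F : Type*) [NormedAddCommGroup F] [NormedSpace ℝ F]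

/-- The Lipschitz maps `X → F` vanishing at the base point, as a submodule of `X → F`. -/
def lip0Submodule : Submodule ℝ (X → F) where
  carrier := {f | (∃ K, LipschitzWith K f) ∧ f x₀ = 0}
  add_mem' := by
    rintro f g ⟨⟨Kf, hf⟩, hf0⟩ ⟨⟨Kg, hg⟩, hg0⟩
    exact ⟨⟨Kf + Kg, hf.add hg⟩, by simp [hf0, hg0]⟩
  zero_mem' := ⟨⟨0, LipschitzWith.const 0⟩, rfl⟩
  smul_mem' := by
    rintro c f ⟨⟨K, hf⟩, hf0⟩
    exact ⟨⟨‖c‖₊ * K, (lipschitzWith_smul c).comp hf⟩, by simp [hf0]⟩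

/-- The space `Lip₀(X, F)` of Lipschitz maps from `X` to `F` vanishing at the base point. -/
def lip0 : Type _ := ↥(lip0Submodule X x₀ F)

instance : AddCommGroup (lip0 X x₀ F) :=
  inferInstanceAs (AddCommGroup ↥(lip0Submodule X x₀ F))

instance : Module ℝ (lip0 X x₀ F) :=
  inferInstanceAs (Module ℝ ↥(lip0Submodule X x₀ F))

variable {X x₀ F}

/-- The underlying function of an element of `Lip₀(X, F)`. -/
def toFun' (f : lip0 X x₀ F) : X → F := f.1

lemma exists_lip (f : lip0 X x₀ F) : ∃ K, LipschitzWith K (toFun' f) := f.2.1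

lemma apply_base (f : lip0 X x₀ F) : toFun' f x₀ = 0 := f.2.2

lemma toFun'_add (f g : lip0 X x₀ F) : toFun' (f + g) = toFun' f + toFun' g := rfl
lemma toFun'_neg (f : lip0 X x₀ F) : toFun' (-f) = -toFun' f := rfl
lemma toFun'_smul (c : ℝ) (f : lip0 X x₀ F) : toFun' (c • f) = c • toFun' f := rfl
lemma toFun'_zero : toFun' (0 : lip0 X x₀ F) = 0 := rfl

variable (X x₀ F) in
/-- The Lipschitz norm of an element of `Lip₀(X, F)`. -/
def lipNorm (f : lip0 X x₀ F) : ℝ :=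
  ⨆ p : X × X, ‖toFun' f p.1 - toFun' f p.2‖ / dist p.1 p.2

lemma ratio_le (f : lip0 X x₀ F) {K : NNReal} (hK : LipschitzWith K (toFun' f))
    (p : X × X) : ‖toFun' f p.1 - toFun' f p.2‖ / dist p.1 p.2 ≤ K := by
  rcases eq_or_ne p.1 p.2 with h | h
  · simp [h]
  · rw [div_le_iff₀ (dist_pos.2 h), ← dist_eq_norm]
    exact hK.dist_le_mul p.1 p.2

lemma bddAbove_ratio (f : lip0 X x₀ F) :
    BddAbove (Set.range fun p : X × X =>
      ‖toFun' f p.1 - toFun' f p.2‖ / dist p.1 p.2) := by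
  obtain ⟨K, hK⟩ := exists_lip f
  exact ⟨K, by rintro r ⟨p, rfl⟩; exact ratio_le f hK p⟩

lemma nonempty_pairs (x₀ : X) : Nonempty (X × X) := ⟨(x₀, x₀)⟩

lemma ratio_le_lipNorm (f : lip0 X x₀ F) (p : X × X) :
    ‖toFun' f p.1 - toFun' f p.2‖ / dist p.1 p.2 ≤ lipNorm X x₀ F f :=
  le_ciSup (bddAbove_ratio f) p

lemma lipNorm_nonneg (f : lip0 X x₀ F) : 0 ≤ lipNorm X x₀ F f := by
  have := ratio_le_lipNorm (x₀ := x₀) f (x₀, x₀)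
  simpa using this

lemma norm_sub_le_lipNorm (f : lip0 X x₀ F) (x y : X) :
    ‖toFun' f x - toFun' f y‖ ≤ lipNorm X x₀ F f * dist x y := by
  rcases eq_or_ne x y with rfl | h
  · simp
  · have := ratio_le_lipNorm (x₀ := x₀) f (x, y)
    rw [div_le_iff₀ (dist_pos.2 h)] at this
    simpa using this

instance : NormedAddCommGroup (lip0 X x₀ F) :=
  AddGroupNorm.toNormedAddCommGroup
    { toFun := lipNorm X x₀ F
      map_zero' := by
        haveI : Nonempty (X × X) := nonempty_pairs x₀
        have h0 : ∀ p : X × X,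
            ‖toFun' (0 : lip0 X x₀ F) p.1 - toFun' (0 : lip0 X x₀ F) p.2‖ /
              dist p.1 p.2 = 0 := by
          intro p; rw [toFun'_zero]; simp
        simp only [lipNorm, h0, ciSup_const]
      add_le' := by
        intro f g
        haveI : Nonempty (X × X) := nonempty_pairs x₀
        apply ciSup_le
        intro p
        rcases eq_or_ne p.1 p.2 with h | h
        · simp only [h, dist_self, div_zero]
          exact add_nonneg (lipNorm_nonneg f) (lipNorm_nonneg g)
        · have hnum : ‖toFun' (f + g) p.1 - toFun' (f + g) p.2‖ ≤
              ‖toFun' f p.1 - toFun' f p.2‖ + ‖toFun' g p.1 - toFun' g p.2‖ := by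
            rw [toFun'_add, Pi.add_apply, Pi.add_apply, add_sub_add_comm]
            exact norm_add_le _ _
          calc ‖toFun' (f + g) p.1 - toFun' (f + g) p.2‖ / dist p.1 p.2
              ≤ (‖toFun' f p.1 - toFun' f p.2‖ +
                  ‖toFun' g p.1 - toFun' g p.2‖) / dist p.1 p.2 := by gcongr
            _ = ‖toFun' f p.1 - toFun' f p.2‖ / dist p.1 p.2 +
                  ‖toFun' g p.1 - toFun' g p.2‖ / dist p.1 p.2 := add_div _ _ _
            _ ≤ lipNorm X x₀ F f + lipNorm X x₀ F g :=
                add_le_add (ratio_le_lipNorm f p) (ratio_le_lipNorm g p)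
      neg' := by
        intro f
        simp only [lipNorm]
        congr 1
        funext p
        congr 1
        rw [toFun'_neg, Pi.neg_apply, Pi.neg_apply, neg_sub_neg, norm_sub_rev]
      eq_zero_of_map_eq_zero' := by
        intro f hf
        have hzero : ∀ x : X, toFun' f x = 0 := by
          intro x
          rcases eq_or_ne x x₀ with h | h
          · rw [h]; exact apply_base f
          · have hf' : lipNorm X x₀ F f = 0 := hf
            have h1 := ratio_le_lipNorm (x₀ := x₀) f (x, x₀)
            rw [hf', div_le_iff₀ (dist_pos.2 h), zero_mul] at h1
            have h2 : toFun' f x - toFun' f x₀ = 0 := by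
              simpa using norm_le_zero_iff.1 h1
            have h3 := apply_base f
            rw [h3, sub_zero] at h2
            exact h2
        exact Subtype.ext (funext hzero) }

lemma lip0_norm_def (f : lip0 X x₀ F) : ‖f‖ = lipNorm X x₀ F f := rfl

instance : NormedSpace ℝ (lip0 X x₀ F) where
  norm_smul_le c f := by
    haveI : Nonempty (X × X) := nonempty_pairs x₀
    rw [lip0_norm_def, lip0_norm_def, lipNorm]
    apply ciSup_le
    intro p
    have h1 : toFun' (c • f) p.1 - toFun' (c • f) p.2 =
        c • (toFun' f p.1 - toFun' f p.2) := by
      rw [toFun'_smul, Pi.smul_apply, Pi.smul_apply, smul_sub]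
    rw [h1, norm_smul]
    rcases eq_or_ne p.1 p.2 with h | h
    · simp only [h, dist_self, div_zero]
      exact mul_nonneg (norm_nonneg c) (lipNorm_nonneg f)
    · rw [mul_div_assoc]
      exact mul_le_mul_of_nonneg_left (ratio_le_lipNorm (x₀ := x₀) f p) (norm_nonneg c)

variable (X x₀ F)

/-- Elements of `Lip₀(X, F)` as continuous maps. -/
def toCM (f : lip0 X x₀ F) : C(X, F) :=
  ⟨toFun' f, by
    obtain ⟨K, hK⟩ := exists_lip f
    exact hK.continuous⟩

/-- The compact-open topology `τ₀` on `Lip₀(X, F)`. -/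
def tau0 : TopologicalSpace (lip0 X x₀ F) :=
  TopologicalSpace.induced (toCM X x₀ F) ContinuousMap.compactOpen

/-- The set `γ(U) = ⋃ₙ (U₀ ∩ B + U₁ ∩ 2B + ⋯ + Uₙ ∩ 2ⁿB)` from the definition of the
mixed topology, where `B` is the closed unit ball of `Lip₀(X, F)`. -/
def gammaSet (U : ℕ → Set (lip0 X x₀ F)) : Set (lip0 X x₀ F) :=
  ⋃ n : ℕ, ∑ i ∈ Finset.range (n + 1), (U i ∩ {f | ‖f‖ ≤ 2 ^ i})

/-- The mixed topology `τ_γ = γ[Lip, τ₀]` on `Lip₀(X, F)`: the topology whose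
neighborhoods of a point `f` are generated by the translates by `f` of the sets `γ(U)`,
where `U` runs over all sequences of convex balanced `τ₀`-neighborhoods of zero. -/
def tauGamma : TopologicalSpace (lip0 X x₀ F) :=
  TopologicalSpace.mkOfNhds fun f =>
    ⨅ (U : ℕ → Set (lip0 X x₀ F))
      (_ : ∀ n, U n ∈ @nhds _ (tau0 X x₀ F) 0 ∧ Convex ℝ (U n) ∧ Balanced ℝ (U n)),
      Filter.principal ((f + ·) '' gammaSet X x₀ F U)

/-- A subset of `Lip₀(X, F)` is norm bounded if the Lipschitz norms of its members are
uniformly bounded. -/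
def NormBounded (B : Set (lip0 X x₀ F)) : Prop :=
  ∃ C : ℝ, ∀ f ∈ B, ‖f‖ ≤ C

/-- The locally convex topology `γτ_γ` on `Lip₀(X, F)`, generated by the seminorms
`f ↦ sup_n αₙ ‖f xₙ - f yₙ‖ / d(xₙ, yₙ)` where `(αₙ)` is a sequence of positive reals
tending to zero and `((xₙ, yₙ))` is a sequence of pairs of distinct points of `X`. -/
def gammaTauGamma : TopologicalSpace (lip0 X x₀ F) :=
  ⨅ (α : ℕ → ℝ) (z : ℕ → X × X)
    (_ : (∀ n, 0 < α n) ∧ Filter.Tendsto α Filter.atTop (nhds 0) ∧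
      ∀ n, (z n).1 ≠ (z n).2),
    TopologicalSpace.induced
      (fun f => UniformFun.ofFun fun n =>
        (α n / dist (z n).1 (z n).2) • (toFun' f (z n).1 - toFun' f (z n).2))
      inferInstance

/-- Evaluation at a point of `X`, as a linear functional on `Lip₀(X)`. -/
def evalLM (x : X) : lip0 X x₀ ℝ →ₗ[ℝ] ℝ where
  toFun f := toFun' f x
  map_add' f g := rfl
  map_smul' c f := rfl

/-- Evaluation at a point of `X`, as a continuous linear functional on `Lip₀(X)`. -/
def evalCLM (x : X) : lip0 X x₀ ℝ →L[ℝ] ℝ :=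
  LinearMap.mkContinuous (evalLM X x₀ x) (dist x x₀)
    (fun f => by
      have h0 : toFun' f x₀ = 0 := apply_base f
      have h := norm_sub_le_lipNorm (x₀ := x₀) f x x₀
      rw [h0, sub_zero] at h
      calc ‖evalLM X x₀ x f‖ ≤ lipNorm X x₀ ℝ f * dist x x₀ := h
        _ = dist x x₀ * ‖f‖ := by rw [lip0_norm_def, mul_comm])

/-- The Lipschitz-free space `F(X)`: the closed linear span of the evaluation
functionals inside the dual of `Lip₀(X)`. -/
def freeSpace : Submodule ℝ (lip0 X x₀ ℝ →L[ℝ] ℝ) :=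
  (Submodule.span ℝ (Set.range (evalCLM X x₀))).topologicalClosure

/-- The Dirac map `δ : X → F(X)`. -/
def deltaF (x : X) : freeSpace X x₀ :=
  ⟨evalCLM X x₀ x,
    Submodule.le_topologicalClosure _ (Submodule.subset_span (Set.mem_range_self x))⟩

/-- For a normed space `G`, the topology on the dual `G'` of uniform convergence on the
convex balanced compact subsets of `G` (the topology of `G'_c`). -/
def dualcTop (G : Type*) [NormedAddCommGroup G] [NormedSpace ℝ G] :
    TopologicalSpace (G →L[ℝ] ℝ) :=
  TopologicalSpace.induced
    (fun φ => UniformOnFun.ofFun {L : Set G | IsCompact L ∧ Convex ℝ L ∧ Balanced ℝ L} ⇑φ)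
    inferInstance



section SetSum
variable {E : Type*} [AddCommMonoid E]

lemma mem_finsetSum {n : ℕ} {A : ℕ → Set E} {u : ℕ → E}
    (h : ∀ i < n, u i ∈ A i) :
    (∑ i ∈ Finset.range n, u i) ∈ ∑ i ∈ Finset.range n, A i := by
  induction n with
  | zero => simp
  | succ n ih =>
      rw [Finset.sum_range_succ, Finset.sum_range_succ]
      exact Set.add_mem_add (ih fun i hi => h i (hi.trans (Nat.lt_succ_self n)))
        (h n (Nat.lt_succ_self n))

lemma finsetSum_subset {n : ℕ} {A B : ℕ → Set E} (h : ∀ i < n, A i ⊆ B i) :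
    (∑ i ∈ Finset.range n, A i) ⊆ ∑ i ∈ Finset.range n, B i := by
  induction n with
  | zero => simp
  | succ n ih =>
      rw [Finset.sum_range_succ, Finset.sum_range_succ]
      exact Set.add_subset_add (ih fun i hi => h i (hi.trans (Nat.lt_succ_self n)))
        (h n (Nat.lt_succ_self n))

lemma finsetSum_mono_of_zero_mem {A : ℕ → Set E} (h0 : ∀ i, (0:E) ∈ A i) {n m : ℕ} (h : n ≤ m) :
    (∑ i ∈ Finset.range n, A i) ⊆ ∑ i ∈ Finset.range m, A i := by
  induction m, h using Nat.le_induction with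
  | base => exact subset_rfl
  | succ m hm ih =>
      rw [Finset.sum_range_succ]
      exact fun x hx => ⟨x, ih hx, 0, h0 m, add_zero x⟩

lemma exists_decomp {n : ℕ} {A : ℕ → Set E} {x : E} (hx : x ∈ ∑ i ∈ Finset.range n, A i) :
    ∃ u : ℕ → E, (∀ i < n, u i ∈ A i) ∧ x = ∑ i ∈ Finset.range n, u i := by
  induction n generalizing x with
  | zero => exact ⟨0, by simp, by simpa using hx⟩
  | succ n ih =>
      rw [Finset.sum_range_succ] at hx
      rcases hx with ⟨y, hy, a, ha, rfl⟩
      obtain ⟨u, hu, rfl⟩ := ih hy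
      classical
      refine ⟨fun i => if i = n then a else u i, fun i hi => ?_, ?_⟩
      · rcases eq_or_ne i n with rfl | hne
        · simpa using ha
        · simpa [hne] using hu i (by omega)
      · rw [Finset.sum_range_succ]
        simp only [if_pos rfl]
        congr 1
        exact (Finset.sum_congr rfl fun i hi => by
          rw [if_neg (by simpa using (Finset.mem_range.mp hi).ne)]).symm
end SetSum

section Aux
variable {X : Type*} [MetricSpace X] {x₀ : X}

lemma toFun'_sub (f g : lip0 X x₀ ℝ) : toFun' (f - g) = toFun' f - toFun' g := rfl

lemma toFun'_finsetSum (u : ℕ → lip0 X x₀ ℝ) (s : Finset ℕ) (x : X) :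
    toFun' (∑ i ∈ s, u i) x = ∑ i ∈ s, toFun' (u i) x :=
  map_sum (evalLM X x₀ x) u s

lemma lipNorm_le' {f : lip0 X x₀ ℝ} {C : ℝ} (hC : 0 ≤ C)
    (h : ∀ x y, |toFun' f x - toFun' f y| ≤ C * dist x y) : ‖f‖ ≤ C := by
  rw [lip0_norm_def]
  haveI := nonempty_pairs x₀
  refine ciSup_le fun p => ?_
  rcases eq_or_ne p.1 p.2 with h' | h'
  · simp [h', hC]
  · rw [div_le_iff₀ (dist_pos.2 h'), Real.norm_eq_abs]
    exact h _ _

lemma abs_sub_le_norm (f : lip0 X x₀ ℝ) (x y : X) :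
    |toFun' f x - toFun' f y| ≤ ‖f‖ * dist x y := by
  simpa [Real.norm_eq_abs, lip0_norm_def] using norm_sub_le_lipNorm (x₀ := x₀) f x y

lemma abs_le_mem_nhds_tau0 (x : X) {ε : ℝ} (hε : 0 < ε) :
    {g : lip0 X x₀ ℝ | |toFun' g x| ≤ ε} ∈ @nhds _ (tau0 X x₀ ℝ) 0 := by
  rw [tau0, mem_nhds_induced]
  refine ⟨{φ : C(X, ℝ) | |φ x| ≤ ε}, ?_, fun g hg => hg⟩
  have h : {φ : C(X, ℝ) | |φ x| ≤ ε} ∈ 𝓝 (0 : C(X, ℝ)) := by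
    have hc : Continuous fun φ : C(X, ℝ) => φ x := ContinuousEvalConst.continuous_eval_const x
    have hmem : {t : ℝ | |t| ≤ ε} ∈ 𝓝 ((0 : C(X, ℝ)) x) := by
      have : ((0 : C(X, ℝ)) x) = 0 := rfl
      rw [this]
      refine Filter.mem_of_superset (Metric.ball_mem_nhds 0 hε) fun t ht => ?_
      simpa [Real.dist_eq] using le_of_lt (by simpa [Real.dist_eq] using ht)
    exact hc.continuousAt.preimage_mem_nhds hmem
  exact h

lemma tau0_nhds_zero_extract {U : Set (lip0 X x₀ ℝ)} (hU : U ∈ @nhds _ (tau0 X x₀ ℝ) 0) :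
    ∃ (K : Set X) (ε : ℝ), IsCompact K ∧ 0 < ε ∧
      {g : lip0 X x₀ ℝ | ∀ x ∈ K, |toFun' g x| ≤ ε} ⊆ U := by
  rw [tau0, mem_nhds_induced] at hU
  obtain ⟨t, ht, hsub⟩ := hU
  have h0 : toCM X x₀ ℝ 0 = 0 := rfl
  rw [h0] at ht
  have ht' : t ∈ 𝓝 (0 : C(X,ℝ)) := ht
  rw [(nhds_basis_uniformity'
    ContinuousMap.hasBasis_compactConvergenceUniformity).mem_iff] at ht'
  obtain ⟨⟨K, V⟩, ⟨hK, hV⟩, hsub'⟩ := ht'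
  obtain ⟨ε, hε, hball⟩ := Metric.mem_uniformity_dist.mp hV
  refine ⟨K, ε/2, hK, by positivity, fun g hg => hsub ?_⟩
  refine hsub' fun x hx => hball ?_
  have : |toFun' g x| < ε := (hg x hx).trans_lt (by linarith)
  simpa [Real.dist_eq, toCM] using this

end Aux

section Aux2
variable {X : Type*} [MetricSpace X] {x₀ : X}

lemma geom_half_eq (n : ℕ) : ∑ i ∈ Finset.range n, ((2:ℝ))⁻¹ ^ i = 2 - 2 * 2⁻¹ ^ n := by
  induction n with
  | zero => norm_num
  | succ n ih => rw [Finset.sum_range_succ, ih, pow_succ]; ring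

lemma geom_half_le (n : ℕ) : ∑ i ∈ Finset.range n, ((2:ℝ))⁻¹ ^ i ≤ 2 := by
  rw [geom_half_eq]
  have : (0:ℝ) ≤ (2⁻¹:ℝ) ^ n := by positivity
  linarith

lemma sum_if_bound (n : ℕ) (M : ℕ → ℕ) (m : ℕ) (lam : ℝ) (hlam : 0 < lam)
    (hbig : ∀ i, M i ≤ m → (2:ℝ) ^ (i + 2) ≤ lam) :
    ∑ i ∈ Finset.range n, (if m < M i then lam / 2 ^ (i + 2) else (2:ℝ) ^ i) ≤ lam := by
  classical
  rw [Finset.sum_ite]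
  have h1 : ∑ i ∈ (Finset.range n).filter (fun i => m < M i), lam / 2 ^ (i + 2) ≤ lam / 2 := by
    calc ∑ i ∈ (Finset.range n).filter (fun i => m < M i), lam / 2 ^ (i + 2)
        ≤ ∑ i ∈ Finset.range n, lam / 2 ^ (i + 2) := by
          refine Finset.sum_le_sum_of_subset_of_nonneg (Finset.filter_subset _ _)
            fun i _ _ => div_nonneg hlam.le (by positivity)
      _ = (lam / 4) * ∑ i ∈ Finset.range n, ((2:ℝ))⁻¹ ^ i := by
          rw [Finset.mul_sum]
          refine Finset.sum_congr rfl fun i _ => ?_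
          rw [pow_add, inv_pow, ← div_div, ← div_eq_mul_inv, div_right_comm]
          norm_num
      _ ≤ (lam / 4) * 2 := by
          refine mul_le_mul_of_nonneg_left (geom_half_le n) (by positivity)
      _ = lam / 2 := by ring
  have h2 : ∑ i ∈ (Finset.range n).filter (fun i => ¬ m < M i), ((2:ℝ)) ^ i ≤ lam / 2 := by
    set T := (Finset.range n).filter (fun i => ¬ m < M i) with hT
    rcases T.eq_empty_or_nonempty with h | h
    · rw [h]; simp; positivity
    · set k := T.max' h with hk
      have hkT : k ∈ T := T.max'_mem h
      have hklam : (2:ℝ) ^ (k + 2) ≤ lam := by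
        have := (Finset.mem_filter.mp hkT).2
        exact hbig k (not_lt.mp this)
      calc ∑ i ∈ T, ((2:ℝ)) ^ i ≤ ∑ i ∈ Finset.range (k + 1), ((2:ℝ)) ^ i := by
            refine Finset.sum_le_sum_of_subset_of_nonneg ?_ fun i _ _ => by positivity
            intro i hi
            exact Finset.mem_range.mpr (Nat.lt_succ_of_le (T.le_max' i hi))
        _ = 2 ^ (k + 1) - 1 := by
            rw [geom_sum_eq (by norm_num : (2:ℝ) ≠ 1)]; norm_num
        _ ≤ 2 ^ (k + 1) := by linarith
        _ ≤ lam / 2 := by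
            rw [le_div_iff₀ (by norm_num)]
            calc (2:ℝ) ^ (k+1) * 2 = 2 ^ (k + 2) := by ring
              _ ≤ lam := hklam
  linarith

lemma gammaSet_small (Fs : ℕ → Finset X) (lam : ℕ → ℝ) (hpos : ∀ m, 0 < lam m)
    (htop : Filter.Tendsto lam Filter.atTop Filter.atTop) :
    ∃ V : ℕ → Set (lip0 X x₀ ℝ),
      (∀ n, V n ∈ @nhds _ (tau0 X x₀ ℝ) 0 ∧ Convex ℝ (V n) ∧ Balanced ℝ (V n)) ∧
      ∀ g ∈ gammaSet X x₀ ℝ V, ∀ m, ∀ x ∈ Fs m, ∀ y ∈ Fs m,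
        |toFun' g x - toFun' g y| ≤ lam m * dist x y := by
  classical
  have hsep : ∀ m, ∃ d : ℝ, 0 < d ∧ ∀ x ∈ Fs m, ∀ y ∈ Fs m, x ≠ y → d ≤ dist x y := by
    intro m
    by_cases h : ((Fs m).offDiag).Nonempty
    · refine ⟨((Fs m).offDiag.image fun q => dist q.1 q.2).min' (h.image (fun q => dist q.1 q.2)), ?_, ?_⟩
      · have mem := Finset.min'_mem ((Fs m).offDiag.image fun q => dist q.1 q.2) (h.image (fun q => dist q.1 q.2))
        rw [Finset.mem_image] at mem
        obtain ⟨q, hq, heq⟩ := mem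
        rw [← heq]
        exact dist_pos.2 (Finset.mem_offDiag.mp hq).2.2
      · intro x hx y hy hxy
        exact Finset.min'_le _ _
          (Finset.mem_image_of_mem _
            (show (x, y) ∈ (Fs m).offDiag from Finset.mem_offDiag.mpr ⟨hx, hy, hxy⟩))
    · refine ⟨1, one_pos, fun x hx y hy hxy => ?_⟩
      exact absurd (show (x, y) ∈ (Fs m).offDiag from Finset.mem_offDiag.mpr ⟨hx, hy, hxy⟩)
        (fun hc => h ⟨_, hc⟩)
  choose sep hseppos hseple using hsep
  have hM : ∀ i : ℕ, ∃ N, ∀ m, N ≤ m → (2:ℝ) ^ (i + 2) ≤ lam m := fun i => by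
    obtain ⟨N, hN⟩ := Filter.eventually_atTop.mp (htop.eventually_ge_atTop ((2:ℝ) ^ (i + 2)))
    exact ⟨N, fun m hm => hN m hm⟩
  choose M hMs using hM
  set eps : ℕ → ℕ → ℝ := fun i m => lam m / 2 ^ (i + 2) * (sep m / 2) with heps
  have hepspos : ∀ i m, 0 < eps i m := fun i m => by
    have h1 := hpos m; have h2 := hseppos m
    simp only [heps]
    positivity
  set V : ℕ → Set (lip0 X x₀ ℝ) :=
    fun i => {g | ∀ m, m < M i → ∀ x ∈ Fs m, |toFun' g x| ≤ eps i m} with hV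
  have hVmem : ∀ i, V i ∈ @nhds _ (tau0 X x₀ ℝ) 0 := by
    intro i
    have heq : V i = ⋂ m ∈ Finset.range (M i), ⋂ x ∈ Fs m,
        {g : lip0 X x₀ ℝ | |toFun' g x| ≤ eps i m} := by
      ext g
      simp [hV, Set.mem_iInter, Finset.mem_range]
    rw [heq]
    exact (Filter.biInter_finset_mem _).mpr fun m _ =>
      (Filter.biInter_finset_mem _).mpr fun x _ => abs_le_mem_nhds_tau0 x (hepspos i m)
  have hVconv : ∀ i, Convex ℝ (V i) := by
    intro i g hg g' hg' a b ha hb hab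
    intro m hm x hx
    have hrw : toFun' (a • g + b • g') x = a * toFun' g x + b * toFun' g' x := rfl
    rw [hrw]
    calc |a * toFun' g x + b * toFun' g' x| ≤ |a * toFun' g x| + |b * toFun' g' x| := abs_add_le _ _
      _ = a * |toFun' g x| + b * |toFun' g' x| := by
          rw [abs_mul, abs_mul, abs_of_nonneg ha, abs_of_nonneg hb]
      _ ≤ a * eps i m + b * eps i m := by
          have := hg m hm x hx; have := hg' m hm x hx
          gcongr <;> assumption
      _ = eps i m := by rw [← add_mul, hab, one_mul]
  have hVbal : ∀ i, Balanced ℝ (V i) := by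
    intro i a ha
    rintro _ ⟨g, hg, rfl⟩
    intro m hm x hx
    have hrw : toFun' (a • g) x = a * toFun' g x := rfl
    rw [hrw, abs_mul]
    have h1 : |a| ≤ 1 := by simpa [Real.norm_eq_abs] using ha
    have h2 := hg m hm x hx
    nlinarith [abs_nonneg (toFun' g x), abs_nonneg a]
  refine ⟨V, fun i => ⟨hVmem i, hVconv i, hVbal i⟩, ?_⟩
  intro g hg m x hx y hy
  obtain ⟨n, hgn⟩ := Set.mem_iUnion.mp hg
  obtain ⟨u, hu, rfl⟩ := exists_decomp hgn
  rw [toFun'_finsetSum, toFun'_finsetSum, ← Finset.sum_sub_distrib]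
  have per_i : ∀ i < n + 1, |toFun' (u i) x - toFun' (u i) y| ≤
      (if m < M i then lam m / 2 ^ (i + 2) else (2:ℝ) ^ i) * dist x y := by
    intro i hi
    obtain ⟨huV, hunorm⟩ := hu i hi
    by_cases hmi : m < M i
    · rw [if_pos hmi]
      rcases eq_or_ne x y with rfl | hxy
      · simp
      · calc |toFun' (u i) x - toFun' (u i) y| ≤ |toFun' (u i) x| + |toFun' (u i) y| :=
              abs_sub _ _
          _ ≤ eps i m + eps i m := add_le_add (huV m hmi x hx) (huV m hmi y hy)
          _ = lam m / 2 ^ (i + 2) * sep m := by simp only [heps]; ring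
          _ ≤ lam m / 2 ^ (i + 2) * dist x y := by
              exact mul_le_mul_of_nonneg_left (hseple m x hx y hy hxy)
                (div_nonneg (hpos m).le (by positivity))
    · rw [if_neg hmi]
      calc |toFun' (u i) x - toFun' (u i) y| ≤ ‖u i‖ * dist x y := abs_sub_le_norm _ _ _
        _ ≤ (2:ℝ) ^ i * dist x y := mul_le_mul_of_nonneg_right hunorm dist_nonneg
  calc |∑ i ∈ Finset.range (n + 1), (toFun' (u i) x - toFun' (u i) y)|
      ≤ ∑ i ∈ Finset.range (n + 1), |toFun' (u i) x - toFun' (u i) y| :=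
        Finset.abs_sum_le_sum_abs _ _
    _ ≤ ∑ i ∈ Finset.range (n + 1),
          (if m < M i then lam m / 2 ^ (i + 2) else (2:ℝ) ^ i) * dist x y :=
        Finset.sum_le_sum fun i hi => per_i i (Finset.mem_range.mp hi)
    _ = (∑ i ∈ Finset.range (n + 1),
          (if m < M i then lam m / 2 ^ (i + 2) else (2:ℝ) ^ i)) * dist x y := by
        rw [Finset.sum_mul]
    _ ≤ lam m * dist x y := by
        refine mul_le_mul_of_nonneg_right ?_ dist_nonneg
        exact sum_if_bound (n + 1) M m (lam m) (hpos m) fun i hMi => hMs i m hMi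
end Aux2

section Aux3
variable {X : Type*} [MetricSpace X] {x₀ : X}

set_option maxHeartbeats 2000000 in
lemma exists_basis_subset_gammaSet (U : ℕ → Set (lip0 X x₀ ℝ))
    (hU : ∀ n, U n ∈ @nhds _ (tau0 X x₀ ℝ) 0) :
    ∃ p : (ℕ → Finset X) × (ℕ → ℝ),
      ((∀ n, 0 < p.2 n) ∧ Filter.Tendsto p.2 Filter.atTop Filter.atTop) ∧
      (⋂ n : ℕ, {f : lip0 X x₀ ℝ | ∀ x ∈ p.1 n, ∀ y ∈ p.1 n,
        |toFun' f x - toFun' f y| ≤ p.2 n * dist x y}) ⊆ gammaSet X x₀ ℝ U := by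
  classical
  choose K ε hKc hεpos hKε using fun i => tau0_nhds_zero_extract (hU i)
  set K' : ℕ → Set X := fun i => {x₀} ∪ ⋃ j ∈ Finset.range (i+1), K j with hK'
  have hK'c : ∀ i, IsCompact (K' i) := fun i =>
    isCompact_singleton.union
      ((Finset.range (i+1)).finite_toSet.isCompact_biUnion fun j _ => hKc j)
  have hKsub : ∀ i, K i ⊆ K' i := fun i x hx =>
    Set.mem_union_right _ (Set.mem_biUnion (Finset.mem_coe.mpr
      (Finset.mem_range.mpr (Nat.lt_succ_self i))) hx)
  have hx₀K' : ∀ i, x₀ ∈ K' i := fun i => Set.mem_union_left _ rfl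
  set ε' : ℕ → ℝ := fun i => (Finset.range (i+1)).inf' ⟨0, by simp⟩ ε with hε'
  have hε'pos : ∀ i, 0 < ε' i := fun i => by
    rw [hε']
    refine (Finset.lt_inf'_iff _).mpr fun j _ => hεpos j
  have hε'le : ∀ i, ε' i ≤ ε i := fun i =>
    Finset.inf'_le _ (Finset.mem_range.mpr (Nat.lt_succ_self i))
  obtain ⟨D, hD0, hDsub⟩ : ∃ D, 0 ≤ D ∧ K' 0 ⊆ Metric.closedBall x₀ D :=
    ((hK'c 0).isBounded.subset_closedBall_lt 0 x₀).imp fun r hr => ⟨hr.1.le, hr.2⟩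
  set c : ℝ := min (1/2) (ε' 0 / (2 * (D + 1))) with hc
  have hcpos : 0 < c := lt_min (by norm_num) (div_pos (hε'pos 0) (by linarith))
  have hc2 : c ≤ 1/2 := min_le_left _ _
  have hc3 : c * (2 * (D + 1)) ≤ ε' 0 := by
    have := min_le_right (1/2) (ε' 0 / (2 * (D + 1)))
    rw [← hc] at this
    calc c * (2 * (D + 1)) ≤ ε' 0 / (2 * (D + 1)) * (2 * (D + 1)) := by
          refine mul_le_mul_of_nonneg_right this (by positivity)
      _ = ε' 0 := div_mul_cancel₀ _ (by positivity)
  set lam : ℕ → ℝ := fun m => c * 2 ^ m with hlam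
  have hlampos : ∀ m, 0 < lam m := fun m => by rw [hlam]; positivity
  have hlamsucc : ∀ m, lam (m+1) = 2 * lam m := fun m => by
    simp only [hlam, pow_succ]; ring
  have hlamtop : Filter.Tendsto lam Filter.atTop Filter.atTop := by
    rw [hlam]
    exact Filter.Tendsto.const_mul_atTop hcpos
      (tendsto_pow_atTop_atTop_of_one_lt one_lt_two)
  set δ : ℕ → ℝ := fun m => ε' (m+1) / (4 * lam (m+1)) with hδ
  have hδpos : ∀ m, 0 < δ m := fun m => by
    have h1 : 0 < ε' (m+1) / (4 * lam (m+1)) :=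
      div_pos (hε'pos (m+1)) (by linarith [hlampos (m+1)])
    simpa [hδ] using h1
  have hδid : ∀ m, δ m * (4 * lam (m+1)) = ε' (m+1) := fun m =>
    div_mul_cancel₀ _ (ne_of_gt (by linarith [hlampos (m+1)] : (0:ℝ) < 4 * lam (m+1)))
  have hnet : ∀ m, ∃ t : Finset X, ∀ x ∈ K' (m+1), ∃ y ∈ t, dist x y < δ m := by
    intro m
    obtain ⟨t, htfin, htsub⟩ :=
      Metric.totallyBounded_iff.mp (hK'c (m+1)).totallyBounded (δ m) (hδpos m)
    refine ⟨htfin.toFinset, fun x hx => ?_⟩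
    obtain ⟨y, hyt, hxy⟩ := Set.mem_iUnion₂.mp (htsub hx)
    exact ⟨y, htfin.mem_toFinset.mpr hyt, Metric.mem_ball.mp hxy⟩
  choose N hN using hnet
  set Fs : ℕ → Finset X := fun m => insert x₀ ((Finset.range (m+1)).biUnion N) with hFs
  have hx₀Fs : ∀ m, x₀ ∈ Fs m := fun m => Finset.mem_insert_self _ _
  have hFsne : ∀ m, (Fs m).Nonempty := fun m => ⟨x₀, hx₀Fs m⟩
  have hNFs : ∀ k m, k ≤ m → ∀ y ∈ N k, y ∈ Fs m := fun k m hkm y hy => by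
    rw [hFs]
    exact Finset.mem_insert_of_mem (Finset.mem_biUnion.mpr
      ⟨k, Finset.mem_range.mpr (Nat.lt_succ_of_le hkm), hy⟩)
  refine ⟨(Fs, lam), ⟨fun m => hlampos m, hlamtop⟩, ?_⟩
  intro f hf
  have hf' : ∀ m, ∀ x ∈ Fs m, ∀ y ∈ Fs m,
      |toFun' f x - toFun' f y| ≤ lam m * dist x y := fun m => Set.mem_iInter.mp hf m
  -- the McShane-type extensions
  set e : ℕ → X → ℝ :=
    fun m z => (Fs m).inf' (hFsne m) fun y => toFun' f y + lam m * dist z y with he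
  have he_le : ∀ m z w, e m z ≤ e m w + lam m * dist z w := by
    intro m z w
    obtain ⟨y₀, hy₀, hy₀eq⟩ :=
      Finset.exists_mem_eq_inf' (hFsne m) (fun y => toFun' f y + lam m * dist w y)
    have h1 : e m z ≤ toFun' f y₀ + lam m * dist z y₀ := Finset.inf'_le _ hy₀
    have h2 : dist z y₀ ≤ dist z w + dist w y₀ := dist_triangle z w y₀
    have h3 := mul_le_mul_of_nonneg_left h2 (hlampos m).le
    have h4 : e m w = toFun' f y₀ + lam m * dist w y₀ := hy₀eq
    nlinarith
  have habs : ∀ m z w, |e m z - e m w| ≤ lam m * dist z w := by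
    intro m z w
    rw [abs_sub_le_iff]
    constructor
    · linarith [he_le m z w]
    · have := he_le m w z
      rw [dist_comm w z] at this
      linarith
  have heq : ∀ m, ∀ y ∈ Fs m, e m y = toFun' f y := by
    intro m y hy
    refine le_antisymm ?_ ?_
    · have h1 : e m y ≤ toFun' f y + lam m * dist y y := Finset.inf'_le _ hy
      simpa using h1
    · refine Finset.le_inf' _ _ fun y' hy' => ?_
      have h1 : toFun' f y - toFun' f y' ≤ |toFun' f y - toFun' f y'| := le_abs_self _
      have h2 := hf' m y hy y' hy'
      linarith
  have he0 : ∀ m, e m x₀ = 0 := fun m => by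
    rw [heq m x₀ (hx₀Fs m), apply_base]
  have hHex : ∀ m, ∃ h : lip0 X x₀ ℝ, toFun' h = e m := fun m =>
    ⟨(⟨e m, ⟨(lam m).toNNReal, LipschitzWith.of_dist_le_mul fun z w => by
        rw [Real.dist_eq, Real.coe_toNNReal _ (hlampos m).le]
        exact habs m z w⟩, he0 m⟩ : lip0 X x₀ ℝ), rfl⟩
  choose H hHfun using hHex
  have hHnorm : ∀ m, ‖H m‖ ≤ lam m := fun m =>
    lipNorm_le' (hlampos m).le fun z w => by rw [hHfun]; exact habs m z w
  set R : ℝ := ‖f‖ with hR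
  have hR0 : 0 ≤ R := norm_nonneg f
  obtain ⟨M, hM⟩ : ∃ M : ℕ, R / c < 2 ^ M := pow_unbounded_of_one_lt _ one_lt_two
  have hRlam : R ≤ lam M := by
    have h2 : lam M = c * 2 ^ M := rfl
    have := (div_lt_iff₀ hcpos).mp hM
    rw [h2]
    nlinarith
  set u : ℕ → lip0 X x₀ ℝ := fun i =>
    if i = 0 then H 0 else if i ≤ M then H i - H (i-1) else f - H M with hu
  have htel : ∀ n, n ≤ M → ∑ i ∈ Finset.range (n+1), u i = H n := by
    intro n hn
    induction n with
    | zero => simp [hu]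
    | succ n ih =>
        rw [Finset.sum_range_succ, ih (Nat.le_of_succ_le hn)]
        have huu : u (n+1) = H (n+1) - H n := by
          simp only [hu, Nat.succ_ne_zero, if_false, if_pos hn, Nat.add_sub_cancel]
        rw [huu]
        abel
  have htot : ∑ i ∈ Finset.range (M + 1 + 1), u i = f := by
    rw [Finset.sum_range_succ, htel M le_rfl]
    have huu : u (M+1) = f - H M := by
      simp only [hu, Nat.succ_ne_zero, if_false, Nat.not_succ_le_self, if_neg]
    rw [huu]
    abel
  have hmem : ∀ i < M + 1 + 1, u i ∈ U i ∩ {g : lip0 X x₀ ℝ | ‖g‖ ≤ 2 ^ i} := by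
    intro i hi
    rcases Nat.eq_zero_or_pos i with rfl | hipos
    · have hu0 : u 0 = H 0 := if_pos rfl
      rw [hu0]
      constructor
      · refine hKε 0 fun x hx => ?_
        have hx' : x ∈ K' 0 := hKsub 0 hx
        have hd : dist x x₀ ≤ D := Metric.mem_closedBall.mp (hDsub hx')
        have h1 : |toFun' (H 0) x| ≤ lam 0 * dist x x₀ := by
          rw [hHfun]
          have := habs 0 x x₀
          rwa [he0 0, sub_zero] at this
        have h2 : lam 0 = c := by rw [hlam]; simp
        have h3 : lam 0 * dist x x₀ ≤ c * D := by
          rw [h2]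
          exact mul_le_mul_of_nonneg_left hd hcpos.le
        have h4 : c * D ≤ ε' 0 := by nlinarith
        exact h1.trans (h3.trans (h4.trans (hε'le 0)))
      · have h2 : lam 0 = c := by rw [hlam]; simp
        have := hHnorm 0
        rw [h2] at this
        simpa using this.trans (hc2.trans (by norm_num))
    · by_cases hiM : i ≤ M
      · obtain ⟨j, rfl⟩ := Nat.exists_eq_succ_of_ne_zero (Nat.pos_iff_ne_zero.mp hipos)
        have huj : u (j+1) = H (j+1) - H j := by
          simp only [hu, Nat.succ_ne_zero, if_false, if_pos hiM, Nat.add_sub_cancel]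
        rw [huj]
        have hlamj : lam j ≤ lam (j+1) := by rw [hlamsucc]; nlinarith [hlampos j]
        constructor
        · refine hKε (j+1) fun x hx => ?_
          have hx' : x ∈ K' (j+1) := hKsub (j+1) hx
          obtain ⟨y, hyN, hxy⟩ := hN j x hx'
          have hyFj : y ∈ Fs j := hNFs j j le_rfl y hyN
          have hyFj1 : y ∈ Fs (j+1) := hNFs j (j+1) (Nat.le_succ j) y hyN
          have h1 : e (j+1) y = toFun' f y := heq (j+1) y hyFj1
          have h2 : e j y = toFun' f y := heq j y hyFj
          have h3 : toFun' (H (j+1) - H j) x =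
              (e (j+1) x - e (j+1) y) - (e j x - e j y) := by
            rw [toFun'_sub, Pi.sub_apply, hHfun (j+1), hHfun j, h1, h2]
            ring
          rw [h3]
          have h4 := habs (j+1) x y
          have h5 := habs j x y
          have h6 : |(e (j+1) x - e (j+1) y) - (e j x - e j y)| ≤
              lam (j+1) * dist x y + lam j * dist x y :=
            (abs_sub _ _).trans (add_le_add h4 h5)
          have h7 : lam (j+1) * dist x y + lam j * dist x y ≤
              (lam (j+1) + lam j) * δ j := by
            have := mul_le_mul_of_nonneg_left hxy.le (by positivity : (0:ℝ) ≤ lam (j+1) + lam j)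
            nlinarith [mul_le_mul_of_nonneg_left hxy.le (hlampos (j+1)).le,
              mul_le_mul_of_nonneg_left hxy.le (hlampos j).le]
          have h8 : (lam (j+1) + lam j) * δ j ≤ ε' (j+1) := by
            have hid := hδid j
            nlinarith [hδpos j, hlampos (j+1)]
          exact h6.trans (h7.trans (h8.trans (hε'le (j+1))))
        · have h9 : ‖H (j+1) - H j‖ ≤ lam (j+1) + lam j :=
            (norm_sub_le _ _).trans (add_le_add (hHnorm (j+1)) (hHnorm j))
          have h10 : lam (j+1) + lam j ≤ (2:ℝ) ^ (j+1) := by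
            have e1 : lam (j+1) = c * 2 ^ (j+1) := rfl
            have e2 : lam j = c * 2 ^ j := rfl
            have hp : (0:ℝ) < 2 ^ j := by positivity
            rw [e1, e2, pow_succ]
            nlinarith
          exact h9.trans h10
      · have hieq : i = M + 1 := by omega
        subst hieq
        have huM : u (M+1) = f - H M := by
          simp only [hu, Nat.succ_ne_zero, if_false, Nat.not_succ_le_self, if_neg]
        rw [huM]
        constructor
        · refine hKε (M+1) fun x hx => ?_
          have hx' : x ∈ K' (M+1) := hKsub (M+1) hx
          obtain ⟨y, hyN, hxy⟩ := hN M x hx'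
          have hyF : y ∈ Fs M := hNFs M M le_rfl y hyN
          have h2 : e M y = toFun' f y := heq M y hyF
          have h3 : toFun' (f - H M) x =
              (toFun' f x - toFun' f y) - (e M x - e M y) := by
            rw [toFun'_sub, Pi.sub_apply, hHfun M, h2]
            ring
          rw [h3]
          have h4 := abs_sub_le_norm f x y
          have h5 := habs M x y
          have h6 : |(toFun' f x - toFun' f y) - (e M x - e M y)| ≤
              R * dist x y + lam M * dist x y :=
            (abs_sub _ _).trans (add_le_add h4 h5)
          have h7 : R * dist x y + lam M * dist x y ≤ (R + lam M) * δ M := by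
            nlinarith [mul_le_mul_of_nonneg_left hxy.le hR0,
              mul_le_mul_of_nonneg_left hxy.le (hlampos M).le]
          have h8 : (R + lam M) * δ M ≤ ε' (M+1) := by
            have hid := hδid M
            have hs := hlamsucc M
            nlinarith [hδpos M, hlampos M]
          exact h6.trans (h7.trans (h8.trans (hε'le (M+1))))
        · have h9 : ‖f - H M‖ ≤ R + lam M :=
            (norm_sub_le _ _).trans (add_le_add le_rfl (hHnorm M))
          have h10 : R + lam M ≤ (2:ℝ) ^ (M+1) := by
            have hs := hlamsucc M
            have : lam (M+1) ≤ (2:ℝ) ^ (M+1) := by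
              have e1 : lam (M+1) = c * 2 ^ (M+1) := rfl
              have hp : (0:ℝ) < 2 ^ (M+1) := by positivity
              rw [e1]
              nlinarith
            linarith
          exact h9.trans h10
  refine Set.mem_iUnion.mpr ⟨M + 1, ?_⟩
  rw [← htot]
  exact mem_finsetSum fun i hi => hmem i hi
end Aux3

section Aux4
variable {X : Type*} [MetricSpace X] {x₀ : X}

lemma gammaSet_mono {U V : ℕ → Set (lip0 X x₀ ℝ)} (h : ∀ n, V n ⊆ U n) :
    gammaSet X x₀ ℝ V ⊆ gammaSet X x₀ ℝ U :=
  Set.iUnion_mono fun n =>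
    finsetSum_subset fun i _ => Set.inter_subset_inter_left _ (h i)

lemma mem_tauGammaNhd_iff (f : lip0 X x₀ ℝ) (S : Set (lip0 X x₀ ℝ)) :
    (S ∈ ⨅ (U : ℕ → Set (lip0 X x₀ ℝ))
      (_ : ∀ n, U n ∈ @nhds _ (tau0 X x₀ ℝ) 0 ∧ Convex ℝ (U n) ∧ Balanced ℝ (U n)),
      Filter.principal ((f + ·) '' gammaSet X x₀ ℝ U)) ↔
    ∃ U : ℕ → Set (lip0 X x₀ ℝ),
      (∀ n, U n ∈ @nhds _ (tau0 X x₀ ℝ) 0 ∧ Convex ℝ (U n) ∧ Balanced ℝ (U n)) ∧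
      (f + ·) '' gammaSet X x₀ ℝ U ⊆ S := by
  haveI : Nonempty {U : ℕ → Set (lip0 X x₀ ℝ) //
      ∀ n, U n ∈ @nhds _ (tau0 X x₀ ℝ) 0 ∧ Convex ℝ (U n) ∧ Balanced ℝ (U n)} :=
    ⟨⟨fun _ => Set.univ, fun _ => ⟨Filter.univ_mem, convex_univ, balanced_univ⟩⟩⟩
  rw [iInf_subtype']
  rw [Filter.mem_iInf_of_directed]
  · constructor
    · rintro ⟨⟨U, hUval⟩, hmem⟩
      exact ⟨U, hUval, Filter.mem_principal.mp hmem⟩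
    · rintro ⟨U, hUval, hsub⟩
      exact ⟨⟨U, hUval⟩, Filter.mem_principal.mpr hsub⟩
  · rintro ⟨U, hUval⟩ ⟨V, hVval⟩
    refine ⟨⟨fun n => U n ∩ V n, fun n =>
      ⟨Filter.inter_mem (hUval n).1 (hVval n).1,
        (hUval n).2.1.inter (hVval n).2.1, (hUval n).2.2.inter (hVval n).2.2⟩⟩, ?_, ?_⟩
    · exact Filter.principal_mono.mpr
        (Set.image_mono (gammaSet_mono fun n => Set.inter_subset_left))
    · exact Filter.principal_mono.mpr
        (Set.image_mono (gammaSet_mono fun n => Set.inter_subset_right))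
end Aux4

/-- The sets `U = ⋂ₙ {f ∈ Lip₀(X) : Lip_{Fₙ}(f) ≤ λₙ}`, where `(Fₙ)`
is a sequence of finite subsets of `X` and `(λₙ)` is a sequence of positive reals
tending to `∞`, form a base of neighborhoods of zero in `(Lip₀(X), τ_γ)`. -/
theorem stmt10 (X : Type*) [MetricSpace X] (x₀ : X) :
    (@nhds _ (tauGamma X x₀ ℝ) 0).HasBasis
      (fun p : (ℕ → Finset X) × (ℕ → ℝ) =>
        (∀ n, 0 < p.2 n) ∧ Filter.Tendsto p.2 Filter.atTop Filter.atTop)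
      (fun p => ⋂ n : ℕ,
        {f : lip0 X x₀ ℝ | ∀ x ∈ p.1 n, ∀ y ∈ p.1 n,
          |toFun' f x - toFun' f y| ≤ p.2 n * dist x y}) := by
  classical
  letI : TopologicalSpace (lip0 X x₀ ℝ) := tauGamma X x₀ ℝ
  constructor
  intro S
  constructor
  · intro hS
    obtain ⟨O, hOS, hOopen, hO0⟩ := mem_nhds_iff.mp hS
    have hOn : O ∈ ⨅ (U : ℕ → Set (lip0 X x₀ ℝ))
        (_ : ∀ n, U n ∈ @nhds _ (tau0 X x₀ ℝ) 0 ∧ Convex ℝ (U n) ∧ Balanced ℝ (U n)),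
        Filter.principal ((0 + ·) '' gammaSet X x₀ ℝ U) := hOopen 0 hO0
    obtain ⟨U, hUval, hUsub⟩ := (mem_tauGammaNhd_iff 0 O).mp hOn
    have himg : gammaSet X x₀ ℝ U ⊆ O := by
      intro g hg
      have := hUsub ⟨g, hg, rfl⟩
      simpa using this
    obtain ⟨p, hp, hsub⟩ := exists_basis_subset_gammaSet U (fun n => (hUval n).1)
    exact ⟨p, hp, hsub.trans (himg.trans hOS)⟩
  · rintro ⟨p, ⟨hppos, hptop⟩, hpsub⟩
    set O : Set (lip0 X x₀ ℝ) := {f | ∃ c : ℝ, 0 < c ∧ c < 1 ∧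
      ∀ m, ∀ x ∈ p.1 m, ∀ y ∈ p.1 m,
        |toFun' f x - toFun' f y| ≤ c * (p.2 m * dist x y)} with hO
    refine mem_nhds_iff.mpr ⟨O, ?_, ?_, ?_⟩
    · -- O ⊆ S
      rintro f ⟨c, hc0, hc1, hf⟩
      refine hpsub (Set.mem_iInter.mpr fun m x hx y hy => ?_)
      have h1 := hf m x hx y hy
      have hd : 0 ≤ p.2 m * dist x y := mul_nonneg (hppos m).le dist_nonneg
      nlinarith
    · -- IsOpen O
      intro f hf
      obtain ⟨c, hc0, hc1, hfc⟩ := hf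
      obtain ⟨V, hVval, hVbound⟩ := gammaSet_small p.1 (fun m => (1 - c)/2 * p.2 m)
        (fun m => mul_pos (by linarith) (hppos m))
        (Filter.Tendsto.const_mul_atTop (by linarith) hptop)
      refine Filter.mem_iInf_of_mem V (Filter.mem_iInf_of_mem hVval ?_)
      rw [Filter.mem_principal]
      rintro _ ⟨g, hg, rfl⟩
      refine ⟨(1+c)/2, by linarith, by linarith, fun m x hx y hy => ?_⟩
      have h1 := hfc m x hx y hy
      have h2 := hVbound g hg m x hx y hy
      have h3 : toFun' (f + g) x - toFun' (f + g) y =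
          (toFun' f x - toFun' f y) + (toFun' g x - toFun' g y) := by
        rw [toFun'_add]; simp [Pi.add_apply]; ring
      rw [h3]
      calc |(toFun' f x - toFun' f y) + (toFun' g x - toFun' g y)|
          ≤ |toFun' f x - toFun' f y| + |toFun' g x - toFun' g y| := abs_add_le _ _
        _ ≤ c * (p.2 m * dist x y) + (1 - c)/2 * p.2 m * dist x y := add_le_add h1 h2
        _ = (1+c)/2 * (p.2 m * dist x y) := by ring
    · -- 0 ∈ O
      refine ⟨1/2, by norm_num, by norm_num, fun m x hx y hy => ?_⟩
      have h0 : toFun' (0 : lip0 X x₀ ℝ) x - toFun' (0 : lip0 X x₀ ℝ) y = 0 := by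
        rw [toFun'_zero]; simp
      rw [h0, abs_zero]
      have : 0 ≤ p.2 m * dist x y := mul_nonneg (hppos m).le dist_nonneg
      linarith

end LipApprox
end
end

section
/- Let X be a pointed metric space and let F be a Banach space. The map K : Lip₀(X) ⊗ F → Lip₀^F(X,F) defined by K(∑_{j=1}^m g_j ⊗ u_j) = ∑_{j=1}^m g_j·u_j is a well-defined linear bijection; hence the tensor product Lip₀(X) ⊗ F is linearly isomorphic to the space Lip₀^F(X,F) of Lipschitz finite-rank operators from X to F. -/
open Filter Topology Set Pointwise

set_option linter.unusedSectionVars false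
set_option linter.unusedVariables false

noncomputable section

namespace LipApprox

variable (X : Type*) [MetricSpace X] (x₀ : X)
variable (F : Type*) [NormedAddCommGroup F] [NormedSpace ℝ F]

variable {X x₀ F}

variable (X x₀ F)

/-- The elementary tensor `g · u : x ↦ g(x) u`, an element of `Lip₀(X, F)` for
`g ∈ Lip₀(X)` and `u ∈ F`. -/
def smulFun (X : Type*) [MetricSpace X] (x₀ : X)
    (F : Type*) [NormedAddCommGroup F] [NormedSpace ℝ F]
    (g : lip0 X x₀ ℝ) (u : F) : lip0 X x₀ F :=
  ⟨fun x => toFun' g x • u,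
    ⟨⟨(exists_lip g).choose * ‖u‖₊, by
        apply LipschitzWith.of_dist_le_mul
        intro x y
        rw [dist_eq_norm, ← sub_smul, norm_smul]
        have h := (exists_lip g).choose_spec.dist_le_mul x y
        rw [Real.dist_eq] at h
        calc ‖toFun' g x - toFun' g y‖ * ‖u‖
            = |toFun' g x - toFun' g y| * ‖u‖ := by rw [Real.norm_eq_abs]
          _ ≤ ((exists_lip g).choose * dist x y) * ‖u‖ := by
              apply mul_le_mul_of_nonneg_right h (norm_nonneg u)
          _ = ↑((exists_lip g).choose * ‖u‖₊) * dist x y := by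
              push_cast; ring⟩,
      by simp [apply_base g]⟩⟩

/-- The canonical linear map `Lip₀(X) ⊗ F → Lip₀(X, F)` determined by
`g ⊗ u ↦ g · u`. -/
def tensorToLip (X : Type*) [MetricSpace X] (x₀ : X)
    (F : Type*) [NormedAddCommGroup F] [NormedSpace ℝ F] :
    TensorProduct ℝ (lip0 X x₀ ℝ) F →ₗ[ℝ] lip0 X x₀ F :=
  TensorProduct.lift <| LinearMap.mk₂ ℝ (smulFun X x₀ F)
    (fun g₁ g₂ u => Subtype.ext (funext fun x => by
      show (toFun' (g₁ + g₂) x) • u = toFun' g₁ x • u + toFun' g₂ x • u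
      rw [toFun'_add, Pi.add_apply, add_smul]))
    (fun c g u => Subtype.ext (funext fun x => by
      show (toFun' (c • g) x) • u = c • (toFun' g x • u)
      rw [toFun'_smul, Pi.smul_apply, smul_assoc]))
    (fun g u₁ u₂ => Subtype.ext (funext fun x => by
      show toFun' g x • (u₁ + u₂) = toFun' g x • u₁ + toFun' g x • u₂
      rw [smul_add]))
    (fun c g u => Subtype.ext (funext fun x => by
      show toFun' g x • (c • u) = c • (toFun' g x • u)
      rw [smul_comm]))


lemma toFun'_sum'' {ι : Type*} (s : Finset ι) (h : ι → lip0 X x₀ F) :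
    toFun' (∑ i ∈ s, h i) = ∑ i ∈ s, toFun' (h i) :=
  map_sum ((lip0Submodule X x₀ F).subtype) h s

lemma tensorToLip_tmul' (g : lip0 X x₀ ℝ) (u : F) :
    tensorToLip X x₀ F (g ⊗ₜ[ℝ] u) = smulFun X x₀ F g u := rfl

lemma toFun'_smulFun' (g : lip0 X x₀ ℝ) (u : F) (x : X) :
    toFun' (smulFun X x₀ F g u) x = toFun' g x • u := rfl

lemma key_eval' {ι : Type*} [DecidableEq ι] (b : Module.Basis ι ℝ F) (c : ι →₀ lip0 X x₀ ℝ) (x : X) :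
    toFun' (tensorToLip X x₀ F
      ((TensorProduct.congr (LinearEquiv.refl ℝ (lip0 X x₀ ℝ)) b.repr).symm
        ((TensorProduct.finsuppScalarRight ℝ ℝ (lip0 X x₀ ℝ) ι).symm c))) x
      = c.sum fun i g => toFun' g x • b i := by
  induction c using Finsupp.induction with
  | zero =>
      rw [map_zero, map_zero, map_zero, toFun'_zero, Finsupp.sum_zero_index]
      rfl
  | single_add i g f hi hg ih =>
      rw [map_add, map_add, map_add, toFun'_add, Pi.add_apply, ih,
        Finsupp.sum_add_index' (fun j => by rw [toFun'_zero]; simp)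
          (fun j g₁ g₂ => by rw [toFun'_add]; simp [add_smul]),
        Finsupp.sum_single_index (by rw [toFun'_zero]; simp)]
      congr 1
      rw [TensorProduct.finsuppScalarRight_symm_apply_single,
        TensorProduct.congr_symm_tmul]
      simp only [LinearEquiv.refl_symm, LinearEquiv.refl_apply,
        Module.Basis.repr_symm_single_one]
      rw [tensorToLip_tmul', toFun'_smulFun']

/-- The map `K : Lip₀(X) ⊗ F → Lip₀ᶠ(X, F)`, determined by
`K(∑ gⱼ ⊗ uⱼ) = ∑ gⱼ · uⱼ`, is a well-defined linear bijection from the tensor product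
`Lip₀(X) ⊗ F` onto the space of Lipschitz finite-rank operators from `X` to `F`
(those `f ∈ Lip₀(X, F)` whose range spans a finite-dimensional subspace of `F`). -/
theorem stmt16 (X : Type*) [MetricSpace X] (x₀ : X)
    (F : Type*) [NormedAddCommGroup F] [NormedSpace ℝ F] [CompleteSpace F] :
    (∀ (g : lip0 X x₀ ℝ) (u : F),
      tensorToLip X x₀ F (g ⊗ₜ[ℝ] u) = smulFun X x₀ F g u) ∧
    Function.Injective (tensorToLip X x₀ F) ∧
    Set.range (tensorToLip X x₀ F) =
      {f : lip0 X x₀ F |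
        FiniteDimensional ℝ (Submodule.span ℝ (Set.range (toFun' f)))} := by
  classical
  haveI : Nonempty X := ⟨x₀⟩
  refine ⟨fun g u => rfl, ?_, ?_⟩
  · rw [injective_iff_map_eq_zero]
    intro t ht
    set b := Module.Basis.ofVectorSpace ℝ F with hb
    set c := (TensorProduct.finsuppScalarRight ℝ ℝ (lip0 X x₀ ℝ) _)
      ((TensorProduct.congr (LinearEquiv.refl ℝ (lip0 X x₀ ℝ)) b.repr) t) with hc
    have htc : (TensorProduct.congr (LinearEquiv.refl ℝ (lip0 X x₀ ℝ)) b.repr).symm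
        ((TensorProduct.finsuppScalarRight ℝ ℝ (lip0 X x₀ ℝ) _).symm c) = t := by
      rw [hc, LinearEquiv.symm_apply_apply, LinearEquiv.symm_apply_apply]
    have hzero : ∀ x : X, (c.sum fun i g => toFun' g x • b i) = 0 := by
      intro x
      rw [← key_eval' X x₀ F b c x, htc, ht, toFun'_zero]
      rfl
    have hc0 : c = 0 := by
      ext i
      have hci : c i = 0 := by
        apply Subtype.ext
        funext x
        have hl : Finsupp.linearCombination ℝ (b : _ → F)
            (Finsupp.mapRange (fun g => toFun' g x) rfl c) = 0 := by
          rw [Finsupp.linearCombination_apply]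
          exact (Finsupp.sum_mapRange_index (h := fun j a => a • b j)
            (fun j => zero_smul ℝ (b j))).trans (hzero x)
        have h0 := linearIndependent_iff.mp b.linearIndependent _ hl
        have h2 : Finsupp.mapRange (fun g => toFun' g x) rfl c i = 0 := by
          rw [h0]; rfl
        replace h2 : toFun' (c i) x = 0 := h2
        exact h2
      rw [hci]
      rfl
    rw [← htc, hc0, map_zero, map_zero]
  · apply Set.Subset.antisymm
    · rintro _ ⟨t, rfl⟩
      simp only [Set.mem_setOf_eq]
      induction t using TensorProduct.induction_on with
      | zero =>
          rw [map_zero, toFun'_zero, Set.range_zero, Submodule.span_zero_singleton]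
          infer_instance
      | tmul g u =>
          have hle : Submodule.span ℝ
              (Set.range (toFun' (tensorToLip X x₀ F (g ⊗ₜ[ℝ] u)))) ≤ ℝ ∙ u := by
            rw [Submodule.span_le]
            rintro _ ⟨x, rfl⟩
            exact Submodule.smul_mem _ (toFun' g x)
              (Submodule.mem_span_singleton_self u)
          exact Submodule.finiteDimensional_of_le hle
      | add t₁ t₂ ih₁ ih₂ =>
          haveI : FiniteDimensional ℝ
            (Submodule.span ℝ (Set.range (toFun' (tensorToLip X x₀ F t₁)))) := ih₁
          haveI : FiniteDimensional ℝ
            (Submodule.span ℝ (Set.range (toFun' (tensorToLip X x₀ F t₂)))) := ih₂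
          have hle : Submodule.span ℝ
              (Set.range (toFun' (tensorToLip X x₀ F (t₁ + t₂)))) ≤
              Submodule.span ℝ (Set.range (toFun' (tensorToLip X x₀ F t₁))) ⊔
              Submodule.span ℝ (Set.range (toFun' (tensorToLip X x₀ F t₂))) := by
            rw [map_add, Submodule.span_le]
            rintro _ ⟨x, rfl⟩
            exact Submodule.add_mem_sup
              (Submodule.subset_span (Set.mem_range_self x))
              (Submodule.subset_span (Set.mem_range_self x))
          exact Submodule.finiteDimensional_of_le hle
    · intro f hf
      simp only [Set.mem_setOf_eq] at hf
      set V := Submodule.span ℝ (Set.range (toFun' f)) with hV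
      haveI : FiniteDimensional ℝ V := hf
      set b := Module.finBasis ℝ V with hbdef
      set f' : X → V := fun x => ⟨toFun' f x, Submodule.subset_span (Set.mem_range_self x)⟩
        with hf'def
      obtain ⟨Kf, hKf⟩ := exists_lip f
      have hf'lip : LipschitzWith Kf f' := by
        apply LipschitzWith.of_dist_le_mul
        intro x y
        have : dist (f' x) (f' y) = dist (toFun' f x) (toFun' f y) := rfl
        rw [this]
        exact hKf.dist_le_mul x y
      set cl : Fin (Module.finrank ℝ V) → (V →L[ℝ] ℝ) :=
        fun i => LinearMap.toContinuousLinearMap (b.coord i) with hcl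
      set g : Fin (Module.finrank ℝ V) → lip0 X x₀ ℝ := fun i =>
        ⟨fun x => cl i (f' x),
          ⟨⟨‖cl i‖₊ * Kf, (cl i).lipschitz.comp hf'lip⟩, by
            show cl i (f' x₀) = 0
            have h0 : f' x₀ = 0 := Subtype.ext (apply_base f)
            rw [h0, map_zero]⟩⟩ with hg
      refine ⟨∑ i, g i ⊗ₜ[ℝ] ((b i : F)), ?_⟩
      apply Subtype.ext
      funext x
      show toFun' (tensorToLip X x₀ F (∑ i, g i ⊗ₜ[ℝ] ((b i : F)))) x = toFun' f x
      rw [map_sum]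
      have hsummand : ∀ i, tensorToLip X x₀ F (g i ⊗ₜ[ℝ] ((b i : F))) =
          smulFun X x₀ F (g i) (b i : F) := fun i => rfl
      simp only [hsummand]
      rw [toFun'_sum'']
      rw [Finset.sum_apply]
      have heach : ∀ i, toFun' (smulFun X x₀ F (g i) (b i : F)) x =
          b.repr (f' x) i • (b i : F) := by
        intro i
        rw [toFun'_smulFun']
        congr 1
      simp only [heach]
      have hrepr : ∑ i, b.repr (f' x) i • b i = f' x := b.sum_repr (f' x)
      calc ∑ i, b.repr (f' x) i • (b i : F)
          = ((∑ i, b.repr (f' x) i • b i : V) : F) := by push_cast; rfl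
        _ = ((f' x : V) : F) := by rw [hrepr]
        _ = toFun' f x := rfl

end LipApprox
end
end
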